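/- arXiv:2508.10323 — 2 statements merged into one kernel-verified Lean document; each statement's English description precedes it below -/
import Mathlib

section
/- The rig $\mathbb{W}(\mathbb{L})$ is not of characteristic one: $\overline{0} \oplus_{\mathbb{W}(\mathbb{L})} \overline{0} \neq \overline{0}$. Specifically, $(\overline{0} \oplus_{\mathbb{W}(\mathbb{L})} \overline{0})(m_{(2,1)}) = 0$ while $\overline{0}(m_{(2,1)}) = \infty$. -/
open scoped Classical ENNReal
open Tropical

noncomputable section

/-- The Lawvere quantale `𝕃 = [0,∞]` viewed as a rig: addition is `min`, multiplication is `+`. -/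
abbrev Trop : Type := Tropical ℝ≥0∞

/-- Coefficient of a formal power series in infinitely many variables. -/
def cf {σ : Type} (φ : MvPowerSeries σ ℕ) (d : σ →₀ ℕ) : ℕ := MvPowerSeries.coeff d φ

/-- The multiset of nonzero entries of an exponent vector. -/
def parts (d : ℕ →₀ ℕ) : Multiset ℕ := d.support.val.map d

lemma zero_not_mem_parts (d : ℕ →₀ ℕ) : (0 : ℕ) ∉ parts d := by
  intro h
  obtain ⟨a, ha, ha0⟩ := Multiset.mem_map.mp h
  exact Finsupp.mem_support_iff.mp (Finset.mem_val.mp ha) ha0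

/-- Partitions: multisets of positive natural numbers. -/
def Ptn : Type := {s : Multiset ℕ // (0 : ℕ) ∉ s}

/-- The monomial symmetric function `m_λ`, as a symmetric power series of bounded degree
in the variables `x_0, x_1, x_2, …`. -/
def mfun (l : Multiset ℕ) : MvPowerSeries ℕ ℕ := fun d => if parts d = l then 1 else 0

/-- `Λ`, the rig of symmetric functions with coefficients in `ℕ`: the subsemiring of
power series generated by the monomial symmetric functions. -/
def Lam : Subsemiring (MvPowerSeries ℕ ℕ) :=
  Subsemiring.closure (Set.range fun l : Ptn => mfun l.1)

/-- `m_λ` as an element of `Λ`. -/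
def mP (l : Ptn) : Lam := ⟨mfun l.1, Subsemiring.subset_closure (Set.mem_range_self l)⟩

/-- The one-part partition `(n)`. -/
def pnat (n : ℕ) (hn : 0 < n) : Ptn := ⟨{n}, fun h => hn.ne' (Multiset.mem_singleton.mp h).symm⟩

/-- The Witt vectors of the Lawvere quantale: rig homomorphisms `Λ → 𝕃`. -/
abbrev WL := Lam →+* Trop

/-- Row margin of an exponent vector on `ℕ × ℕ`. -/
def rowM (e : (ℕ × ℕ) →₀ ℕ) : ℕ →₀ ℕ := e.mapDomain Prod.fst
/-- Column margin of an exponent vector on `ℕ × ℕ`. -/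
def colM (e : (ℕ × ℕ) →₀ ℕ) : ℕ →₀ ℕ := e.mapDomain Prod.snd

/-- The elementary tensor `a ⊗ b` in `Λ ⊗ Λ`, realized as a power series on variables
`x_i ⊗ x_j` indexed by `ℕ × ℕ`. -/
def tens (a b : MvPowerSeries ℕ ℕ) : MvPowerSeries (ℕ × ℕ) ℕ :=
  fun e => cf a (rowM e) * cf b (colM e)

/-- Comultiplication `Δ^×`: substitute the family `x_i ⊗ x_j` for the variables,
along a bijection `ℕ ≃ ℕ × ℕ`. -/
def Dmul (eqt : ℕ ≃ ℕ × ℕ) (φ : MvPowerSeries ℕ ℕ) : MvPowerSeries (ℕ × ℕ) ℕ :=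
  fun e => cf φ (Finsupp.equivMapDomain eqt.symm e)

/-- Left margin of an exponent vector on `ℕ ⊕ ℕ`. -/
def lM (e : (ℕ ⊕ ℕ) →₀ ℕ) : ℕ →₀ ℕ := Finsupp.comapDomain Sum.inl e Sum.inl_injective.injOn
/-- Right margin of an exponent vector on `ℕ ⊕ ℕ`. -/
def rM (e : (ℕ ⊕ ℕ) →₀ ℕ) : ℕ →₀ ℕ := Finsupp.comapDomain Sum.inr e Sum.inr_injective.injOn

/-- The elementary tensor `a ⊗ b` realized as a power series on `ℕ ⊕ ℕ`. -/
def tensP (a b : MvPowerSeries ℕ ℕ) : MvPowerSeries (ℕ ⊕ ℕ) ℕ :=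
  fun e => cf a (lM e) * cf b (rM e)

/-- Coaddition `Δ^+`: substitute `x_i ⊗ 1` and `1 ⊗ x_i` for the variables,
along a bijection `ℕ ≃ ℕ ⊕ ℕ`. -/
def Dadd (eqp : ℕ ≃ ℕ ⊕ ℕ) (φ : MvPowerSeries ℕ ℕ) : MvPowerSeries (ℕ ⊕ ℕ) ℕ :=
  fun e => cf φ (Finsupp.equivMapDomain eqp.symm e)

/-- The order on `𝕎(𝕃)`: `f ≤ g` iff `g (m_λ) ≤ f (m_λ)` (usual order on `[0,∞]`)
for every partition `λ ∈ ℙ`. -/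
def leF (F G : Lam → Trop) : Prop :=
  ∀ l : Ptn, l.1 ≠ 0 → untrop (G (mP l)) ≤ untrop (F (mP l))

/-- Witt multiplication: `(f ⊗ g)(φ) = min` of `f(m_μ) + g(m_μ')` over the pairs `(μ, μ')`
occurring in `Δ^×(φ)`. -/
def wmulF (eqt : ℕ ≃ ℕ × ℕ) (F G : Lam → Trop) : Lam → Trop := fun φ =>
  trop (sInf {x : ℝ≥0∞ | ∃ e, cf (Dmul eqt (φ : MvPowerSeries ℕ ℕ)) e ≠ 0 ∧
    x = untrop (F (mP ⟨parts (rowM e), zero_not_mem_parts _⟩)) +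
        untrop (G (mP ⟨parts (colM e), zero_not_mem_parts _⟩))})

/-- Witt addition: `(f ⊕ g)(φ) = min` of `f(m_μ) + g(m_μ')` over the pairs `(μ, μ')`
occurring in `Δ^+(φ)`. -/
def waddF (eqp : ℕ ≃ ℕ ⊕ ℕ) (F G : Lam → Trop) : Lam → Trop := fun φ =>
  trop (sInf {x : ℝ≥0∞ | ∃ e, cf (Dadd eqp (φ : MvPowerSeries ℕ ℕ)) e ≠ 0 ∧
    x = untrop (F (mP ⟨parts (lM e), zero_not_mem_parts _⟩)) +
        untrop (G (mP ⟨parts (rM e), zero_not_mem_parts _⟩))})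

/-- Specification of the multiplicative unit `0̄` of `𝕎(𝕃)`:
`0̄(m_(n)) = 0` for one-part partitions and `0̄(m_λ) = ∞` otherwise. -/
def zbar (z : WL) : Prop :=
  ∀ l : Ptn, z (mP l) = if l.1.card ≤ 1 then trop (0 : ℝ≥0∞) else trop (⊤ : ℝ≥0∞)

/-- The partition `(2,1)`. -/
def p21 : Ptn := ⟨{2, 1}, by decide⟩

lemma parts_single (a : ℕ) (n : ℕ) (h : n ≠ 0) :
    parts (Finsupp.single a n) = {n} := by
  unfold parts
  rw [Finsupp.support_single_ne_zero _ h]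
  simp

lemma parts_pair (a b : ℕ) (hab : a ≠ b) :
    parts (Finsupp.single a 2 + Finsupp.single b 1) = ({2, 1} : Multiset ℕ) := by
  unfold parts
  rw [Finsupp.support_add_eq]
  · rw [Finsupp.support_single_ne_zero _ (by norm_num),
      Finsupp.support_single_ne_zero _ (by norm_num)]
    have h1 : ({a} ∪ {b} : Finset ℕ) = insert a {b} := rfl
    have h2 : ({a} ∪ {b} : Finset ℕ).val = (a ::ₘ {b} : Multiset ℕ) := by
      rw [h1, Finset.insert_val_of_notMem (by simpa using hab)]
      rfl
    rw [h2]
    simp [Finsupp.single_apply, hab, Ne.symm hab]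
  · rw [Finsupp.support_single_ne_zero _ (by norm_num),
      Finsupp.support_single_ne_zero _ (by norm_num)]
    exact Finset.disjoint_singleton.mpr hab

/-- The rig `𝕎(𝕃)` is not of characteristic one: `0̄ ⊕ 0̄ ≠ 0̄`. Specifically
`(0̄ ⊕ 0̄)(m_(2,1)) = 0` while `0̄(m_(2,1)) = ∞`. -/
theorem WL_not_char_one (eqp : ℕ ≃ ℕ ⊕ ℕ) (z : WL) (hz : zbar z) :
    waddF eqp ⇑z ⇑z (mP p21) = trop (0 : ℝ≥0∞) ∧
    z (mP p21) = trop (⊤ : ℝ≥0∞) ∧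
    waddF eqp ⇑z ⇑z ≠ ⇑z := by
  have hz21 : z (mP p21) = trop (⊤ : ℝ≥0∞) := by
    have := hz p21
    simpa [p21] using this
  -- the witness exponent vector
  set e : (ℕ ⊕ ℕ) →₀ ℕ :=
    Finsupp.single (Sum.inl 0) 2 + Finsupp.single (Sum.inr 0) 1 with he
  have hlM : lM e = Finsupp.single 0 2 := by
    ext n
    simp [lM, he, Finsupp.comapDomain_apply, Finsupp.single_apply]
  have hrM : rM e = Finsupp.single 0 1 := by
    ext n
    simp [rM, he, Finsupp.comapDomain_apply, Finsupp.single_apply]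
  have hab : eqp.symm (Sum.inl 0) ≠ eqp.symm (Sum.inr 0) := by
    intro h
    exact absurd (eqp.symm.injective h) (by simp)
  have hmap : Finsupp.equivMapDomain eqp.symm e =
      Finsupp.single (eqp.symm (Sum.inl 0)) 2 + Finsupp.single (eqp.symm (Sum.inr 0)) 1 := by
    rw [he, Finsupp.equivMapDomain_eq_mapDomain, Finsupp.mapDomain_add,
      Finsupp.mapDomain_single, Finsupp.mapDomain_single]
  have hcf : cf (Dadd eqp ((mP p21 : Lam) : MvPowerSeries ℕ ℕ)) e ≠ 0 := by
    show cf (mfun p21.1) (Finsupp.equivMapDomain eqp.symm e) ≠ 0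
    rw [hmap]
    have hparts : parts (Finsupp.single (eqp.symm (Sum.inl 0)) 2 +
        Finsupp.single (eqp.symm (Sum.inr 0)) 1) = p21.1 := parts_pair _ _ hab
    show mfun p21.1 _ ≠ 0
    rw [mfun, hparts]
    simp
  have hzl : z (mP ⟨parts (lM e), zero_not_mem_parts _⟩) = trop (0 : ℝ≥0∞) := by
    have := hz ⟨parts (lM e), zero_not_mem_parts _⟩
    rw [this]
    have : parts (lM e) = {2} := by rw [hlM]; exact parts_single 0 2 (by norm_num)
    simp [this]
  have hzr : z (mP ⟨parts (rM e), zero_not_mem_parts _⟩) = trop (0 : ℝ≥0∞) := by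
    have := hz ⟨parts (rM e), zero_not_mem_parts _⟩
    rw [this]
    have : parts (rM e) = {1} := by rw [hrM]; exact parts_single 0 1 (by norm_num)
    simp [this]
  have hmem : (0 : ℝ≥0∞) ∈ {x : ℝ≥0∞ | ∃ e,
      cf (Dadd eqp ((mP p21 : Lam) : MvPowerSeries ℕ ℕ)) e ≠ 0 ∧
      x = untrop (z (mP ⟨parts (lM e), zero_not_mem_parts _⟩)) +
          untrop (z (mP ⟨parts (rM e), zero_not_mem_parts _⟩))} := by
    exact ⟨e, hcf, by rw [hzl, hzr]; simp⟩
  have hInf : sInf {x : ℝ≥0∞ | ∃ e,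
      cf (Dadd eqp ((mP p21 : Lam) : MvPowerSeries ℕ ℕ)) e ≠ 0 ∧
      x = untrop (z (mP ⟨parts (lM e), zero_not_mem_parts _⟩)) +
          untrop (z (mP ⟨parts (rM e), zero_not_mem_parts _⟩))} = 0 :=
    le_antisymm (sInf_le hmem) zero_le
  have hadd : waddF eqp ⇑z ⇑z (mP p21) = trop (0 : ℝ≥0∞) := by
    rw [waddF, hInf]
  refine ⟨hadd, hz21, fun h => ?_⟩
  have := congrFun h (mP p21)
  rw [hadd, hz21] at this
  have : (0 : ℝ≥0∞) = ⊤ := by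
    have := congrArg untrop this
    simpa using this
  simp at this

end
end

section
/- Let $(X,d)$ be a $\mathbb{W}(\mathbb{L})$-category, and for $n \in \mathbb{N}_{>0}$ define $d_n(x,y) := d(x,y)(h_n)$ where $h_n$ is the $n$-th complete homogeneous symmetric function. Then $(X, d_n)$ is an $\mathbb{L}$-category: $d_n(x,x) = 0$ and $d_n(x,z) \leq d_n(x,y) + d_n(y,z)$; in fact $(d(x,y) \otimes_{\mathbb{W}(\mathbb{L})} d(y,z))(h_n) = d_n(x,y) + d_n(y,z)$. -/
open scoped Classical ENNReal
open Tropical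

noncomputable section

/-- degree -/
def dg {σ : Type} (e : σ →₀ ℕ) : ℕ := e.sum fun _ k => k

lemma dg_mapDomain {σ τ : Type} (h : σ → τ) (e : σ →₀ ℕ) : dg (e.mapDomain h) = dg e :=
  Finsupp.sum_mapDomain_index (fun _ => rfl) (fun _ _ _ => rfl)

lemma parts_sum (d : ℕ →₀ ℕ) : (parts d).sum = dg d := rfl

lemma dg_equivMapDomain {σ τ : Type} (h : σ ≃ τ) (e : σ →₀ ℕ) :
    dg (Finsupp.equivMapDomain h e) = dg e := by
  rw [Finsupp.equivMapDomain_eq_mapDomain, dg_mapDomain]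

lemma cf_apply {σ : Type} (φ : MvPowerSeries σ ℕ) (e : σ →₀ ℕ) : cf φ e = φ e := rfl

lemma cf_mfun (l : Multiset ℕ) (e : ℕ →₀ ℕ) :
    cf (mfun l) e = if parts e = l then 1 else 0 := rfl

lemma dg_eq_zero (e : ℕ →₀ ℕ) (h : dg e = 0) : e = 0 := by
  ext a
  by_cases ha : a ∈ e.support
  · have := Finset.sum_eq_zero_iff.mp h a ha
    simpa using this
  · simpa using Finsupp.notMem_support_iff.mp ha
lemma parts_pos {d : ℕ →₀ ℕ} {i : ℕ} (h : i ∈ parts d) : 0 < i :=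
  Nat.pos_of_ne_zero fun h0 => zero_not_mem_parts d (h0 ▸ h)

/-- realize a multiset of positive naturals as the parts of a finsupp -/
lemma exists_parts_eq (μ : Multiset ℕ) (hμ : (0:ℕ) ∉ μ) : ∃ f : ℕ →₀ ℕ, parts f = μ := by
  induction μ using Multiset.induction with
  | empty => exact ⟨0, rfl⟩
  | cons a s ih =>
    obtain ⟨f, hf⟩ := ih (fun h => hμ (Multiset.mem_cons_of_mem h))
    have ha : a ≠ 0 := fun h => hμ (h ▸ Multiset.mem_cons_self a s)
    obtain ⟨i, hi⟩ := Infinite.exists_notMem_finset f.support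
    refine ⟨f + Finsupp.single i a, ?_⟩
    have hdisj : Disjoint f.support (Finsupp.single i a).support := by
      rw [Finsupp.support_single_ne_zero i ha]
      simpa using hi
    have hsupp : (f + Finsupp.single i a).support = insert i f.support := by
      rw [Finsupp.support_add_eq hdisj, Finsupp.support_single_ne_zero i ha]
      ext j; simp [Finset.mem_union, or_comm]
    unfold parts
    rw [hsupp, Finset.insert_val, Multiset.ndinsert_of_notMem (by simpa using hi),
      Multiset.map_cons]
    have h1 : (f + Finsupp.single i a) i = a := by
      simp [Finsupp.notMem_support_iff.mp hi]
    have h2 : ∀ j ∈ f.support.val, (f + Finsupp.single i a) j = f j := by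
      intro j hj
      have : j ≠ i := fun h => hi (h ▸ hj)
      simp [Finsupp.single_apply, this.symm]
    rw [h1, Multiset.map_congr rfl h2]; exact congrArg (a ::ₘ ·) hf
lemma rowM_add (a b : (ℕ × ℕ) →₀ ℕ) : rowM (a + b) = rowM a + rowM b :=
  Finsupp.mapDomain_add
lemma colM_add (a b : (ℕ × ℕ) →₀ ℕ) : colM (a + b) = colM a + colM b :=
  Finsupp.mapDomain_add

/-- existence of a matrix with given margins -/
lemma exists_margins : ∀ (m : ℕ) (f g : ℕ →₀ ℕ), dg f = m → dg g = m →
    ∃ e : (ℕ × ℕ) →₀ ℕ, rowM e = f ∧ colM e = g := by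
  intro m
  induction m with
  | zero =>
    intro f g hf hg
    exact ⟨0, by rw [dg_eq_zero f hf]; exact Finsupp.mapDomain_zero,
      by rw [dg_eq_zero g hg]; exact Finsupp.mapDomain_zero⟩
  | succ m ih =>
    intro f g hf hg
    have hf0 : f ≠ 0 := fun h => by simp [h, dg] at hf
    have hg0 : g ≠ 0 := fun h => by simp [h, dg] at hg
    obtain ⟨i, hi⟩ := Finsupp.support_nonempty_iff.mpr hf0
    obtain ⟨j, hj⟩ := Finsupp.support_nonempty_iff.mpr hg0
    have hfi : 1 ≤ f i := Nat.one_le_iff_ne_zero.mpr (Finsupp.mem_support_iff.mp hi)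
    have hgj : 1 ≤ g j := Nat.one_le_iff_ne_zero.mpr (Finsupp.mem_support_iff.mp hj)
    have hfeq : f = (f - Finsupp.single i 1) + Finsupp.single i 1 := by
      ext a
      rcases eq_or_ne a i with h | h
      · simp [h, Finsupp.single_apply, Nat.sub_add_cancel, hfi]
      · simp [Finsupp.single_apply, (Ne.symm h : i ≠ a)]
    have hgeq : g = (g - Finsupp.single j 1) + Finsupp.single j 1 := by
      ext a
      rcases eq_or_ne a j with h | h
      · simp [h, Finsupp.single_apply, Nat.sub_add_cancel, hgj]
      · simp [Finsupp.single_apply, (Ne.symm h : j ≠ a)]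
    have hdgf : dg (f - Finsupp.single i 1) = m := by
      have : dg f = dg (f - Finsupp.single i 1) + dg (Finsupp.single i 1) := by
        conv_lhs => rw [hfeq]
        exact Finsupp.sum_add_index' (fun _ => rfl) (fun _ _ _ => rfl)
      have h1 : dg (Finsupp.single i 1) = 1 := by simp [dg, Finsupp.sum_single_index]
      omega
    have hdgg : dg (g - Finsupp.single j 1) = m := by
      have : dg g = dg (g - Finsupp.single j 1) + dg (Finsupp.single j 1) := by
        conv_lhs => rw [hgeq]
        exact Finsupp.sum_add_index' (fun _ => rfl) (fun _ _ _ => rfl)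
      have h1 : dg (Finsupp.single j 1) = 1 := by simp [dg, Finsupp.sum_single_index]
      omega
    obtain ⟨e, he1, he2⟩ := ih _ _ hdgf hdgg
    refine ⟨e + Finsupp.single (i, j) 1, ?_, ?_⟩
    · rw [rowM_add, he1]
      rw [show rowM (Finsupp.single (i,j) 1) = Finsupp.single i 1 from Finsupp.mapDomain_single]
      exact hfeq.symm
    · rw [colM_add, he2]
      rw [show colM (Finsupp.single (i,j) 1) = Finsupp.single j 1 from Finsupp.mapDomain_single]
      exact hgeq.symm
/-- a partition as a `Ptn` -/
def toPtn {n : ℕ} (p : n.Partition) : Ptn :=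
  ⟨p.parts, fun h => lt_irrefl 0 (p.parts_pos h)⟩

/-- exponent vectors of degree `n` give partitions of `n` -/
def mkp (n : ℕ) (e : ℕ →₀ ℕ) (he : dg e = n) : n.Partition :=
  ⟨parts e, fun h => parts_pos h, by rw [parts_sum, he]⟩

lemma toPtn_mkp (n : ℕ) (e : ℕ →₀ ℕ) (he : dg e = n) :
    toPtn (mkp n e he) = ⟨parts e, zero_not_mem_parts e⟩ := rfl

/-- decomposition of the complete homogeneous function -/
lemma hN_eq (n : ℕ) (hN : Lam)
    (hh : ∀ e : ℕ →₀ ℕ, cf (hN : MvPowerSeries ℕ ℕ) e =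
      if (e.sum fun _ k => k) = n then 1 else 0) :
    hN = ∑ p : n.Partition, mP (toPtn p) := by
  apply Subtype.ext
  have hcoe : ((∑ p : n.Partition, mP (toPtn p) : Lam) : MvPowerSeries ℕ ℕ) =
      ∑ p : n.Partition, mfun (toPtn p).1 := by
    exact map_sum Lam.subtype _ _
  rw [hcoe]
  ext e
  have hr : (MvPowerSeries.coeff e) (∑ p : n.Partition, mfun (toPtn p).1) =
      ∑ p : n.Partition, cf (mfun (toPtn p).1) e := map_sum _ _ _
  rw [hr]
  have hl : (MvPowerSeries.coeff e) (hN : MvPowerSeries ℕ ℕ) = if dg e = n then 1 else 0 :=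
    hh e
  rw [hl]
  by_cases he : dg e = n
  · rw [if_pos he]
    rw [Finset.sum_eq_single (mkp n e he)]
    · simp [cf_mfun, toPtn, mkp]
    · intro p _ hp
      rw [cf_mfun, if_neg]
      intro hc
      exact hp (Nat.Partition.ext hc.symm)
    · intro h; exact absurd (Finset.mem_univ _) h
  · rw [if_neg he]
    symm
    apply Finset.sum_eq_zero
    intro p _
    rw [cf_mfun, if_neg]
    intro hc
    exact he (by rw [← parts_sum, hc]; exact p.parts_sum)
instance partNonempty (n : ℕ) : Nonempty (n.Partition) :=
  ⟨Nat.Partition.ofSums n {n} (by simp)⟩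

section hNfacts

variable (n : ℕ) (hN : Lam)
    (hh : ∀ e : ℕ →₀ ℕ, cf (hN : MvPowerSeries ℕ ℕ) e =
      if (e.sum fun _ k => k) = n then 1 else 0)

include hh

lemma untrop_le (F : WL) (p : n.Partition) :
    untrop (F hN) ≤ untrop (F (mP (toPtn p))) := by
  rw [hN_eq n hN hh, map_sum]
  rw [← Finset.add_sum_erase _ _ (Finset.mem_univ p), untrop_add]
  exact min_le_left _ _

lemma untrop_attained (F : WL) : ∃ p : n.Partition, F hN = F (mP (toPtn p)) := by
  have h1 : F hN = ∑ p : n.Partition, F (mP (toPtn p)) := by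
    rw [hN_eq n hN hh, map_sum]
  obtain ⟨p, _, hp⟩ := Finset.exists_mem_eq_inf (Finset.univ : Finset n.Partition)
    Finset.univ_nonempty (fun p => untrop (F (mP (toPtn p))))
  refine ⟨p, untrop_injective ?_⟩
  rw [h1, Finset.untrop_sum']
  exact hp

end hNfacts
section main

variable (n : ℕ) (hN : Lam)
    (hh : ∀ e : ℕ →₀ ℕ, cf (hN : MvPowerSeries ℕ ℕ) e =
      if (e.sum fun _ k => k) = n then 1 else 0)

include hh

lemma realize (F G : WL) : ∃ e : (ℕ × ℕ) →₀ ℕ, dg e = n ∧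
    untrop (F (mP ⟨parts (rowM e), zero_not_mem_parts _⟩)) = untrop (F hN) ∧
    untrop (G (mP ⟨parts (colM e), zero_not_mem_parts _⟩)) = untrop (G hN) := by
  obtain ⟨p, hp⟩ := untrop_attained n hN hh F
  obtain ⟨q, hq⟩ := untrop_attained n hN hh G
  obtain ⟨f, hf⟩ := exists_parts_eq p.parts (toPtn p).2
  obtain ⟨g, hg⟩ := exists_parts_eq q.parts (toPtn q).2
  have hdf : dg f = n := by rw [← parts_sum, hf]; exact p.parts_sum
  have hdg : dg g = n := by rw [← parts_sum, hg]; exact q.parts_sum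
  obtain ⟨e, he1, he2⟩ := exists_margins n f g hdf hdg
  refine ⟨e, ?_, ?_, ?_⟩
  · rw [show dg e = dg (rowM e) from (dg_mapDomain _ _).symm, he1, hdf]
  · have hpe : (⟨parts (rowM e), zero_not_mem_parts _⟩ : Ptn) = toPtn p :=
      Subtype.ext (show parts (rowM e) = p.parts by rw [he1, hf])
    rw [hpe, hp]
  · have hqe : (⟨parts (colM e), zero_not_mem_parts _⟩ : Ptn) = toPtn q :=
      Subtype.ext (show parts (colM e) = q.parts by rw [he2, hg])
    rw [hqe, hq]

lemma dg_of_ne (eqt : ℕ ≃ ℕ × ℕ) (e : (ℕ × ℕ) →₀ ℕ)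
    (he : cf (Dmul eqt (hN : MvPowerSeries ℕ ℕ)) e ≠ 0) : dg e = n := by
  have h1 : cf (Dmul eqt (hN : MvPowerSeries ℕ ℕ)) e =
      cf (hN : MvPowerSeries ℕ ℕ) (Finsupp.equivMapDomain eqt.symm e) := rfl
  rw [h1, hh] at he
  by_contra h
  rw [if_neg (by rwa [show ((Finsupp.equivMapDomain eqt.symm e).sum fun _ k => k) =
    dg (Finsupp.equivMapDomain eqt.symm e) from rfl, dg_equivMapDomain])] at he
  exact he rfl

lemma wmul_hN (eqt : ℕ ≃ ℕ × ℕ) (F G : WL) :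
    wmulF eqt ⇑F ⇑G hN = trop (untrop (F hN) + untrop (G hN)) := by
  unfold wmulF
  congr 1
  apply le_antisymm
  · obtain ⟨e, hde, hF, hG⟩ := realize n hN hh F G
    apply sInf_le
    refine ⟨e, ?_, by rw [hF, hG]⟩
    have h1 : cf (Dmul eqt (hN : MvPowerSeries ℕ ℕ)) e =
        cf (hN : MvPowerSeries ℕ ℕ) (Finsupp.equivMapDomain eqt.symm e) := rfl
    rw [h1, hh, if_pos (by
      rw [show ((Finsupp.equivMapDomain eqt.symm e).sum fun _ k => k) =
        dg (Finsupp.equivMapDomain eqt.symm e) from rfl, dg_equivMapDomain]; exact hde)]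
    exact one_ne_zero
  · apply le_sInf
    rintro s ⟨e, he0, rfl⟩
    have hde : dg e = n := dg_of_ne n hN hh eqt e he0
    have hr : dg (rowM e) = n := (dg_mapDomain _ _).trans hde
    have hc : dg (colM e) = n := (dg_mapDomain _ _).trans hde
    have h1 := untrop_le n hN hh F (mkp n (rowM e) hr)
    have h2 := untrop_le n hN hh G (mkp n (colM e) hc)
    rw [toPtn_mkp] at h1 h2
    exact add_le_add h1 h2

end main
/-- For any `𝕎(𝕃)`-category `(X, d)` and `n ∈ ℕ_{>0}`, setting
`d_n(x,y) := d(x,y)(h_n)` where `h_n = Σ_{|λ|=n} m_λ` is the `n`-th complete homogeneous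
symmetric function, the pair `(X, d_n)` is an `𝕃`-category: `d_n(x,x) = 0` and
`d_n(x,z) ≤ d_n(x,y) + d_n(y,z)`; in fact
`(d(x,y) ⊗ d(y,z))(h_n) = d_n(x,y) + d_n(y,z)`. -/
theorem complete_homogeneous_L_category (eqt : ℕ ≃ ℕ × ℕ) (X : Type) (d : X → X → WL)
    (hid : ∃ z : WL, zbar z ∧ ∀ x : X, leF ⇑z ⇑(d x x))
    (hcomp : ∀ x y w : X, leF (wmulF eqt ⇑(d x y) ⇑(d y w)) ⇑(d x w))
    (n : ℕ) (hn : 0 < n) (hN : Lam)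
    (hh : ∀ e : ℕ →₀ ℕ, cf (hN : MvPowerSeries ℕ ℕ) e =
      if (e.sum fun _ k => k) = n then 1 else 0) :
    (∀ x : X, d x x hN = trop (0 : ℝ≥0∞)) ∧
    (∀ x y w : X, wmulF eqt ⇑(d x y) ⇑(d y w) hN =
      trop (untrop (d x y hN) + untrop (d y w hN))) ∧
    (∀ x y w : X, untrop (d x w hN) ≤ untrop (d x y hN) + untrop (d y w hN)) := by
  obtain ⟨z, hz, hzd⟩ := hid
  have part2 : ∀ x y w : X, wmulF eqt ⇑(d x y) ⇑(d y w) hN =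
      trop (untrop (d x y hN) + untrop (d y w hN)) :=
    fun x y w => wmul_hN n hN hh eqt (d x y) (d y w)
  refine ⟨?_, part2, ?_⟩
  · intro x
    let pn : n.Partition :=
      ⟨{n}, fun hi => by rw [Multiset.mem_singleton.mp hi]; exact hn, by simp⟩
    have h1 : untrop (d x x hN) ≤ untrop (d x x (mP (toPtn pn))) := untrop_le n hN hh _ pn
    have hne : (toPtn pn).1 ≠ 0 := Multiset.singleton_ne_zero n
    have h2 := hzd x (toPtn pn) hne
    have h3 : z (mP (toPtn pn)) = trop (0 : ℝ≥0∞) := by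
      rw [hz (toPtn pn), if_pos]
      show ({n} : Multiset ℕ).card ≤ 1
      simp
    rw [h3, untrop_trop] at h2
    apply untrop_injective
    rw [untrop_trop]
    exact le_antisymm (h1.trans h2) zero_le
  · intro x y w
    obtain ⟨e, hde, hF, hG⟩ := realize n hN hh (d x y) (d y w)
    have hdgdm : dg (Finsupp.equivMapDomain eqt.symm e) = n := by
      rw [dg_equivMapDomain]; exact hde
    let pl : n.Partition := mkp n (Finsupp.equivMapDomain eqt.symm e) hdgdm
    have hne : (toPtn pl).1 ≠ 0 := by
      intro h0
      have hz0 : dg (Finsupp.equivMapDomain eqt.symm e) = 0 := by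
        rw [← parts_sum]
        show (parts (Finsupp.equivMapDomain eqt.symm e)).sum = 0
        rw [show parts (Finsupp.equivMapDomain eqt.symm e) = (toPtn pl).1 from rfl, h0]
        rfl
      omega
    have h1 : untrop (d x w hN) ≤ untrop (d x w (mP (toPtn pl))) := untrop_le n hN hh _ pl
    have h2 := hcomp x y w (toPtn pl) hne
    have h3 : untrop (wmulF eqt ⇑(d x y) ⇑(d y w) (mP (toPtn pl))) ≤
        untrop (d x y hN) + untrop (d y w hN) := by
      unfold wmulF
      rw [untrop_trop]
      apply sInf_le
      refine ⟨e, ?_, by rw [hF, hG]⟩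
      have hc : cf (Dmul eqt ((mP (toPtn pl) : Lam) : MvPowerSeries ℕ ℕ)) e =
          cf (mfun (toPtn pl).1) (Finsupp.equivMapDomain eqt.symm e) := rfl
      have hpp : parts (Finsupp.equivMapDomain eqt.symm e) = (toPtn pl).1 := rfl
      rw [hc, cf_mfun, if_pos hpp]
      exact one_ne_zero
    exact h1.trans (h2.trans h3)

end
end
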